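/- With notation as above, if the age $a(s;\theta,p) = n-r+\sum_{j=1}^{r-1}\{\theta_{p(j+1)}-\theta_{p(j)}\}+\{1-\theta_{p(1)}\}+\theta_{p(r)}$ equals $1$ and $\lambda \neq (1^n)$, then $r = n-1$ (so $\lambda = (2,1^{n-2})$) and $\theta = (0,0,\dots,0)$. -/
import Mathlib

lemma fract_zero_exists {x : ℚ} (h : Int.fract x = 0) : ∃ k : ℤ, x = k :=
  ⟨⌊x⌋, by have := Int.fract_add_floor x; rw [h] at this; push_cast at this ⊢; linarith⟩

/-- With notation as in the age formula, if
`a(s;θ,p) = n - r + ∑_{j=1}^{r-1} {θ_{p(j+1)} - θ_{p(j)}} + {1 - θ_{p(1)}} + θ_{p(r)}`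
equals `1` and `λ ≠ (1ⁿ)`, then `r = n - 1` (so `λ = (2,1^{n-2})`) and
`θ = (0,0,…,0)`.  (Indices 0-indexed below.) -/
theorem stmt_13 (n r : ℕ) (hr : 0 < r) (lam : Fin r → ℕ) (hpos : ∀ j, 0 < lam j)
    (hmono : Antitone lam) (hsum : ∑ j, lam j = n)
    (a : Fin r → ℕ) (ha : ∀ j, a j < lam j)
    (θ : Fin r → ℚ) (hθ : ∀ j, θ j = (a j : ℚ) / (lam j : ℚ))
    (p : Equiv.Perm (Fin r))
    (hage : (n : ℚ) - (r : ℚ)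
        + (∑ j : Fin (r - 1),
            Int.fract (θ (p ⟨(j : ℕ) + 1, by have := j.isLt; omega⟩)
              - θ (p ⟨(j : ℕ), by have := j.isLt; omega⟩)))
        + Int.fract (1 - θ (p ⟨0, hr⟩)) + θ (p ⟨r - 1, by omega⟩) = 1)
    (hnontriv : ∃ j, lam j ≠ 1) :
    r = n - 1 ∧ ∀ j, θ j = 0 := by
  have hθ01 : ∀ j, 0 ≤ θ j ∧ θ j < 1 := by
    intro j
    rw [hθ j]
    have hl : (0:ℚ) < (lam j : ℚ) := by exact_mod_cast hpos j
    constructor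
    · positivity
    · rw [div_lt_one hl]; exact_mod_cast ha j
  -- n > r
  have hrn : r + 1 ≤ n := by
    obtain ⟨j0, hj0⟩ := hnontriv
    have hlt : ∑ _j : Fin r, 1 < ∑ j, lam j := by
      apply Finset.sum_lt_sum
      · intro i _; exact hpos i
      · exact ⟨j0, Finset.mem_univ _, by have := hpos j0; omega⟩
    simpa [hsum] using hlt
  set S := ∑ j : Fin (r - 1),
      Int.fract (θ (p ⟨(j : ℕ) + 1, by have := j.isLt; omega⟩)
        - θ (p ⟨(j : ℕ), by have := j.isLt; omega⟩)) with hSdef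
  have hSnn : 0 ≤ S := Finset.sum_nonneg fun j _ => Int.fract_nonneg _
  have hF0nn : 0 ≤ Int.fract (1 - θ (p ⟨0, hr⟩)) := Int.fract_nonneg _
  have hTnn : 0 ≤ θ (p ⟨r - 1, by omega⟩) := (hθ01 _).1
  have hnrQ : (r : ℚ) + 1 ≤ (n : ℚ) := by exact_mod_cast hrn
  have hS0 : S = 0 := by linarith
  have hF00 : Int.fract (1 - θ (p ⟨0, hr⟩)) = 0 := by linarith
  have hT0 : θ (p ⟨r - 1, by omega⟩) = 0 := by linarith
  have hnr1 : (n : ℚ) = (r : ℚ) + 1 := by linarith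
  have hn : n = r + 1 := by exact_mod_cast hnr1
  -- each fract in the sum is zero
  have hSterms : ∀ j : Fin (r - 1),
      Int.fract (θ (p ⟨(j : ℕ) + 1, by have := j.isLt; omega⟩)
        - θ (p ⟨(j : ℕ), by have := j.isLt; omega⟩)) = 0 := by
    intro j
    have := (Finset.sum_eq_zero_iff_of_nonneg
      (fun i (_ : i ∈ Finset.univ) => Int.fract_nonneg _)).mp hS0.symm.symm
    exact this j (Finset.mem_univ j)
  -- base: θ (p 0) = 0
  have hbase : θ (p ⟨0, hr⟩) = 0 := by
    obtain ⟨k, hk⟩ := fract_zero_exists hF00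
    have h1 := (hθ01 (p ⟨0, hr⟩)).1
    have h2 := (hθ01 (p ⟨0, hr⟩)).2
    have hk1 : (0:ℚ) < (k:ℚ) := by linarith
    have hk2 : (k:ℚ) ≤ 1 := by linarith
    have : k = 1 := by exact_mod_cast le_antisymm (by exact_mod_cast hk2) (by exact_mod_cast hk1)
    rw [this] at hk; push_cast at hk; linarith
  have key : ∀ j (hj : j < r), θ (p ⟨j, hj⟩) = 0 := by
    intro j
    induction j with
    | zero => intro hj; exact hbase
    | succ k ih =>
      intro hj
      have hk : k < r := by omega
      have hk1 : k < r - 1 := by omega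
      have hf := hSterms ⟨k, hk1⟩
      simp only at hf
      obtain ⟨z, hz⟩ := fract_zero_exists hf
      have hprev : θ (p ⟨k, hk⟩) = 0 := ih hk
      have h1 := (hθ01 (p ⟨k + 1, hj⟩)).1
      have h2 := (hθ01 (p ⟨k + 1, hj⟩)).2
      have hprev' : θ (p ⟨k, by omega⟩) = 0 := hprev
      rw [hprev'] at hz
      have hz1 : (-1:ℚ) < (z:ℚ) := by linarith
      have hz2 : (z:ℚ) < 1 := by linarith
      have : z = 0 := by
        have a1 : (-1:ℤ) < z := by exact_mod_cast hz1
        have a2 : z < 1 := by exact_mod_cast hz2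
        omega
      rw [this] at hz; push_cast at hz
      have : θ (p ⟨k + 1, by omega⟩) = 0 := by linarith
      exact this
  refine ⟨by omega, fun j => ?_⟩
  have : j = p ⟨(p.symm j : ℕ), (p.symm j).isLt⟩ := by simp
  rw [this]
  exact key _ _
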